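/- Let U, V, W be finite-dimensional real normed spaces, let Z ⊆ U, X ⊆ V, Y ⊆ W be nonempty convex compact sets, and let f : Y → X be an affine map with dim f(Y) = dim X. Consider C = {g : g an affine map U → V with g(Z) ⊆ X and g(Z) ∩ relint(f(Y)) = ∅}, with the topology induced from the normed space of affine maps U → V, and let D ⊆ C be the set of constant maps with value in ∂X = X ∖ relint(X). Then D is a strong deformation retract of C: there exists a continuous map H : C × [0,1] → C with H(g,1) = g for all g ∈ C, H(g,0) ∈ D for all g ∈ C, and H(g,t) = g for all g ∈ D and t ∈ [0,1]. -/

import Mathlib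

open Set Pointwise Topology

noncomputable def convDim {V : Type*} [AddCommGroup V] [Module ℝ V] (s : Set V) : ℕ :=
  Module.finrank ℝ (affineSpan ℝ s).direction

def compSet {U V W : Type*}
    [NormedAddCommGroup U] [NormedSpace ℝ U]
    [NormedAddCommGroup V] [NormedSpace ℝ V]
    [NormedAddCommGroup W] [NormedSpace ℝ W]
    (Z : Set U) (X : Set V) (Y : Set W) (f : W →ᵃ[ℝ] V) : Set (U →ᴬ[ℝ] V) :=
  {g | ⇑g '' Z ⊆ X ∧ ⇑g '' Z ∩ intrinsicInterior ℝ (⇑f '' Y) = ∅}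

def bdryConstSet {U V : Type*}
    [NormedAddCommGroup U] [NormedSpace ℝ U]
    [NormedAddCommGroup V] [NormedSpace ℝ V]
    (X : Set V) : Set (U →ᴬ[ℝ] V) :=
  {g | ∃ x ∈ X \ intrinsicInterior ℝ X, ∀ u : U, g u = x}

section AuxLemmas

variable {U V : Type*} [NormedAddCommGroup U] [NormedSpace ℝ U]
  [NormedAddCommGroup V] [NormedSpace ℝ V]

lemma contAffine_eval_continuous (z : U) :
    Continuous fun g : U →ᴬ[ℝ] V => g z := by
  have he := (ContinuousAffineMap.toConstProdContinuousLinearMap ℝ U V).continuous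
  have h1 : Continuous fun g : U →ᴬ[ℝ] V => g.contLinear := continuous_snd.comp he
  have h2 : Continuous fun g : U →ᴬ[ℝ] V => g 0 := continuous_fst.comp he
  have h3 : Continuous fun g : U →ᴬ[ℝ] V => g.contLinear z + g 0 :=
    (h1.clm_apply continuous_const).add h2
  have : (fun g : U →ᴬ[ℝ] V => g z) = fun g : U →ᴬ[ℝ] V => g.contLinear z + g 0 := by
    funext g
    conv_lhs => rw [congrFun g.decomp z]
    simp
  rw [this]; exact h3

lemma contAffine_const_continuous :
    Continuous fun x : V => ContinuousAffineMap.const ℝ U x := by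
  have h : ∀ x : V, ContinuousAffineMap.const ℝ U x =
      (ContinuousAffineMap.toConstProdContinuousLinearMap ℝ U V).symm (x, 0) := by
    intro x
    have h2 : (ContinuousAffineMap.toConstProdContinuousLinearMap ℝ U V)
        (ContinuousAffineMap.const ℝ U x) = (x, 0) :=
      Prod.ext (by simp) (by simp [ContinuousAffineMap.const_contLinear])
    rw [← h2]
    exact ((ContinuousAffineMap.toConstProdContinuousLinearMap ℝ U V).symm_apply_apply _).symm
  have : (fun x : V => ContinuousAffineMap.const ℝ U x) =
      fun x : V => (ContinuousAffineMap.toConstProdContinuousLinearMap ℝ U V).symm (x, 0) := by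
    funext x; exact h x
  rw [this]
  exact (ContinuousAffineMap.toConstProdContinuousLinearMap ℝ U V).symm.continuous.comp
    (continuous_id.prodMk continuous_const)

lemma mem_intrinsicInterior_iff_chart {s : Set V} {S : AffineSubspace ℝ V}
    (hS : affineSpan ℝ s = S) {x₀ : V} (hx₀ : x₀ ∈ S) (v : S.direction) :
    x₀ + (v : V) ∈ intrinsicInterior ℝ s ↔
      v ∈ interior {w : S.direction | x₀ + (w : V) ∈ s} := by
  subst hS
  let φ : (affineSpan ℝ s).direction ≃ₜ affineSpan ℝ s :=
  { toFun := fun w => ⟨x₀ + (w : V), by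
      simpa [add_comm] using AffineSubspace.vadd_mem_of_mem_direction w.2 hx₀⟩
    invFun := fun p => ⟨(p : V) - x₀, by
      simpa using AffineSubspace.vsub_mem_direction p.2 hx₀⟩
    left_inv := fun w => by ext; simp
    right_inv := fun p => by ext; simp
    continuous_toFun := Continuous.subtype_mk (continuous_const.add continuous_subtype_val)
      (fun w => by simpa [add_comm] using AffineSubspace.vadd_mem_of_mem_direction w.2 hx₀)
    continuous_invFun := Continuous.subtype_mk (continuous_subtype_val.sub continuous_const)
      (fun p => by simpa using AffineSubspace.vsub_mem_direction p.2 hx₀) }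
  have hpre : {w : (affineSpan ℝ s).direction | x₀ + (w : V) ∈ s}
      = φ ⁻¹' ((↑) ⁻¹' s) := rfl
  rw [hpre, ← φ.preimage_interior]
  constructor
  · rintro ⟨y, hy, hyv⟩
    have hy' : y = φ v := Subtype.ext (by simp [φ, hyv])
    rwa [hy'] at hy
  · intro hv
    exact ⟨φ v, hv, rfl⟩

end AuxLemmas

set_option maxHeartbeats 1000000 in
theorem bdryConst_strong_deformation_retract_compSet {U V W : Type*}
    [NormedAddCommGroup U] [NormedSpace ℝ U] [FiniteDimensional ℝ U]
    [NormedAddCommGroup V] [NormedSpace ℝ V] [FiniteDimensional ℝ V]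
    [NormedAddCommGroup W] [NormedSpace ℝ W] [FiniteDimensional ℝ W]
    (Z : Set U) (X : Set V) (Y : Set W)
    (hZne : Z.Nonempty) (hZconv : Convex ℝ Z) (hZcomp : IsCompact Z)
    (hXne : X.Nonempty) (hXconv : Convex ℝ X) (hXcomp : IsCompact X)
    (hYne : Y.Nonempty) (hYconv : Convex ℝ Y) (hYcomp : IsCompact Y)
    (f : W →ᵃ[ℝ] V) (hf : ⇑f '' Y ⊆ X)
    (hdim : convDim (⇑f '' Y) = convDim X) :
    ∃ H : ↥(compSet Z X Y f) × ↥(Set.Icc (0 : ℝ) 1) → ↥(compSet Z X Y f),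
      Continuous H ∧
      (∀ g : ↥(compSet Z X Y f), H (g, ⟨1, by norm_num⟩) = g) ∧
      (∀ g : ↥(compSet Z X Y f),
        (↑(H (g, ⟨0, by norm_num⟩)) : U →ᴬ[ℝ] V) ∈ bdryConstSet X) ∧
      (∀ (g : ↥(compSet Z X Y f)) (t : ↥(Set.Icc (0 : ℝ) 1)),
        (↑g : U →ᴬ[ℝ] V) ∈ bdryConstSet X → H (g, t) = g) := by
  classical
  obtain ⟨z₀, hz₀⟩ := hZne
  have hfYne : (⇑f '' Y).Nonempty := hYne.image _
  have hfYconv : Convex ℝ (⇑f '' Y) := hYconv.affine_image f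
  -- span equality
  have hspanle : affineSpan ℝ (⇑f '' Y) ≤ affineSpan ℝ X := affineSpan_mono ℝ hf
  simp only [convDim] at hdim
  have hdir : (affineSpan ℝ (⇑f '' Y)).direction = (affineSpan ℝ X).direction :=
    Submodule.eq_of_le_of_finrank_eq (AffineSubspace.direction_le hspanle) hdim
  have hspan : affineSpan ℝ (⇑f '' Y) = affineSpan ℝ X := by
    obtain ⟨p, hp⟩ := hfYne
    exact AffineSubspace.ext_of_direction_eq hdir
      ⟨p, subset_affineSpan ℝ _ hp, subset_affineSpan ℝ _ (hf hp)⟩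
  -- base point
  obtain ⟨x₀, hx₀⟩ := hfYne.intrinsicInterior hfYconv
  have hx₀fY : x₀ ∈ ⇑f '' Y := intrinsicInterior_subset hx₀
  have hx₀X : x₀ ∈ X := hf hx₀fY
  have hx₀span : x₀ ∈ affineSpan ℝ X := subset_affineSpan ℝ X hx₀X
  set E := (affineSpan ℝ X).direction with hE
  set K : Set E := {w : E | x₀ + (w : V) ∈ X} with hKdef
  set KY : Set E := {w : E | x₀ + (w : V) ∈ ⇑f '' Y} with hKYdef
  have chartX : ∀ v : E, x₀ + (v : V) ∈ intrinsicInterior ℝ X ↔ v ∈ interior K :=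
    fun v => mem_intrinsicInterior_iff_chart rfl hx₀span v
  have chartY : ∀ v : E, x₀ + (v : V) ∈ intrinsicInterior ℝ (⇑f '' Y) ↔ v ∈ interior KY :=
    fun v => mem_intrinsicInterior_iff_chart hspan hx₀span v
  have hKYK : interior KY ⊆ interior K := interior_mono (fun w hw => hf hw)
  have h0KY : (0 : E) ∈ interior KY := by
    have h := (chartY 0).1 (by simpa using hx₀)
    exact h
  have h0K : (0 : E) ∈ interior K := hKYK h0KY
  have hKnhds : K ∈ 𝓝 (0 : E) := mem_interior_iff_mem_nhds.1 h0K
  have hconvpre : ∀ s : Set V, Convex ℝ s → Convex ℝ {w : E | x₀ + (w : V) ∈ s} := by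
    intro s hs u hu w hw a b ha hb hab
    have hcomb : x₀ + ((a • u + b • w : E) : V)
        = a • (x₀ + (u : V)) + b • (x₀ + (w : V)) := by
      push_cast
      rw [smul_add, smul_add]
      have hx : a • x₀ + b • x₀ = x₀ := by rw [← add_smul, hab, one_smul]
      calc x₀ + (a • (u : V) + b • (w : V))
          = (a • x₀ + b • x₀) + (a • (u : V) + b • (w : V)) := by rw [hx]
        _ = a • x₀ + a • (u : V) + (b • x₀ + b • (w : V)) := by abel
    show x₀ + ((a • u + b • w : E) : V) ∈ s
    rw [hcomb]
    exact hs hu hw ha hb hab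
  have hKconv : Convex ℝ K := hconvpre X hXconv
  have hKYconv : Convex ℝ KY := hconvpre _ hfYconv
  have hKclosed : IsClosed K :=
    hXcomp.isClosed.preimage (continuous_const.add continuous_subtype_val)
  have hKbdd : Bornology.IsVonNBounded ℝ K := by
    rw [NormedSpace.isVonNBounded_iff ℝ, isBounded_iff_forall_norm_le]
    obtain ⟨R, hR⟩ := (isBounded_iff_forall_norm_le.1 hXcomp.isBounded)
    refine ⟨R + ‖x₀‖, fun w hw => ?_⟩
    have h1 : ‖x₀ + (w : V)‖ ≤ R := hR _ hw
    calc ‖w‖ = ‖(x₀ + (w : V)) - x₀‖ := by rw [add_sub_cancel_left]; rfl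
    _ ≤ ‖x₀ + (w : V)‖ + ‖x₀‖ := norm_sub_le _ _
    _ ≤ R + ‖x₀‖ := by linarith
  have habs : Absorbent ℝ K := absorbent_nhds_zero hKnhds
  set γ : E → ℝ := gauge K with hγdef
  have hγcont : Continuous γ := continuous_gauge hKconv hKnhds
  have hγ0 : ∀ w : E, γ w = 0 ↔ w = 0 := fun w => gauge_eq_zero habs hKbdd
  have hγle1 : ∀ w : E, w ∈ K → γ w ≤ 1 := fun w hw => gauge_le_one_of_mem hw
  have hγmem : ∀ w : E, γ w ≤ 1 → w ∈ K := by
    intro w hw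
    have h := (gauge_le_one_iff_mem_closure hKconv hKnhds).1 hw
    rwa [hKclosed.closure_eq] at h
  have hγlt : ∀ w : E, w ∈ interior K → γ w < 1 :=
    fun w hw => (gauge_lt_one_iff_mem_interior hKconv hKnhds).2 hw
  have hγlt' : ∀ w : E, γ w < 1 → w ∈ interior K :=
    fun w hw => (gauge_lt_one_iff_mem_interior hKconv hKnhds).1 hw
  have hγsmul : ∀ (c : ℝ), 0 ≤ c → ∀ w, γ (c • w) = c * γ w :=
    fun c hc w => gauge_smul_of_nonneg hc w
  -- facts about elements of C
  have hmemC : ∀ g : ↥(compSet Z X Y f), ∀ z ∈ Z,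
      (↑g : U →ᴬ[ℝ] V) z ∈ X ∧ (↑g : U →ᴬ[ℝ] V) z ∉ intrinsicInterior ℝ (⇑f '' Y) := by
    intro g z hz
    obtain ⟨hg1, hg2⟩ := g.2
    refine ⟨hg1 ⟨z, hz, rfl⟩, fun hcon => ?_⟩
    have hmem : (↑g : U →ᴬ[ℝ] V) z
        ∈ (⇑(↑g : U →ᴬ[ℝ] V) '' Z) ∩ intrinsicInterior ℝ (⇑f '' Y) := ⟨⟨z, hz, rfl⟩, hcon⟩
    rw [hg2] at hmem
    exact hmem
  have hgspan : ∀ g : ↥(compSet Z X Y f), ((↑g : U →ᴬ[ℝ] V) z₀) ∈ affineSpan ℝ X :=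
    fun g => subset_affineSpan ℝ X (hmemC g z₀ hz₀).1
  set vv : ↥(compSet Z X Y f) → E := fun g =>
    ⟨(↑g : U →ᴬ[ℝ] V) z₀ - x₀, by simpa using AffineSubspace.vsub_mem_direction (hgspan g) hx₀span⟩
    with hvvdef
  have hvvcoe : ∀ g, ((vv g : E) : V) = (↑g : U →ᴬ[ℝ] V) z₀ - x₀ := fun g => rfl
  have hvvK : ∀ g, vv g ∈ K := by
    intro g
    show x₀ + ((vv g : E) : V) ∈ X
    rw [hvvcoe, add_sub_cancel]
    exact (hmemC g z₀ hz₀).1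
  have hgz₀eq : ∀ g, x₀ + ((vv g : E) : V) = (↑g : U →ᴬ[ℝ] V) z₀ := by
    intro g; rw [hvvcoe, add_sub_cancel]
  have hvvne : ∀ g, vv g ≠ 0 := by
    intro g hcon
    have h1 : (↑g : U →ᴬ[ℝ] V) z₀ - x₀ = 0 := by
      have := congrArg (Subtype.val) hcon
      rw [← hvvcoe]
      simpa using this
    have h2 : (↑g : U →ᴬ[ℝ] V) z₀ = x₀ := by
      rwa [sub_eq_zero] at h1
    exact (hmemC g z₀ hz₀).2 (h2 ▸ hx₀)
  have hγpos : ∀ g, 0 < γ (vv g) :=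
    fun g => lt_of_le_of_ne (gauge_nonneg _) (fun h => hvvne g ((hγ0 _).1 h.symm))
  set ss : ↥(compSet Z X Y f) → ℝ := fun g => (γ (vv g))⁻¹ with hssdef
  have hss1 : ∀ g, 1 ≤ ss g := fun g => one_le_inv₀ (hγpos g) |>.2 <| id <| (hγle1 _ (hvvK g))
  have hssγ : ∀ g, γ (vv g) * ss g = 1 := fun g => mul_inv_cancel₀ (hγpos g).ne'
  have hγss : ∀ g, ss g * γ (vv g) = 1 := fun g => inv_mul_cancel₀ (hγpos g).ne'
  -- relint fY points are not hit by boundary rays: key ray lemma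
  have hray : ∀ (g : ↥(compSet Z X Y f)) (σ : ℝ), 1 ≤ σ →
      x₀ + σ • ((vv g : E) : V) ∉ intrinsicInterior ℝ (⇑f '' Y) := by
    intro g σ hσ hcon
    have hcoe : (((σ • vv g : E)) : V) = σ • ((vv g : E) : V) := rfl
    have hmemint : (σ • vv g : E) ∈ interior KY := (chartY _).1 (by rw [hcoe]; exact hcon)
    rcases eq_or_lt_of_le hσ with heq | hlt
    · apply (hmemC g z₀ hz₀).2
      rw [← hgz₀eq g]
      rw [← heq, one_smul] at hcon
      exact hcon
    · have hσpos : (0 : ℝ) < σ := lt_trans one_pos hlt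
      have hcomb : (1 - σ⁻¹) • (0 : E) + σ⁻¹ • (σ • vv g) = vv g := by
        rw [smul_zero, zero_add, smul_smul, inv_mul_cancel₀ hσpos.ne', one_smul]
      have hmem2 : vv g ∈ interior KY := by
        rw [← hcomb]
        exact hKYconv.interior h0KY hmemint (by
            have : σ⁻¹ ≤ 1 := inv_le_one_of_one_le₀ hσ
            linarith) (by positivity) (by ring)
      apply (hmemC g z₀ hz₀).2
      rw [← hgz₀eq g]
      exact (chartY _).2 hmem2
  -- the homotopy pieces
  set aa : ℝ → ℝ := fun t => max (2 * t - 1) 0 with haadef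
  set σσ : ↥(compSet Z X Y f) → ℝ → ℝ := fun g t => 2 * t + (1 - 2 * t) * ss g with hσσdef
  set cc : ↥(compSet Z X Y f) → ℝ → V := fun g t =>
    if t ≤ 1 / 2 then x₀ + σσ g t • ((vv g : E) : V)
    else (2 - 2 * t) • ((↑g : U →ᴬ[ℝ] V) z₀) with hccdef
  set Hfun : ↥(compSet Z X Y f) → ℝ → (U →ᴬ[ℝ] V) := fun g t =>
    aa t • (↑g : U →ᴬ[ℝ] V) + ContinuousAffineMap.const ℝ U (cc g t) with hHfundef
  have Happly : ∀ g t u, Hfun g t u = aa t • (↑g : U →ᴬ[ℝ] V) u + cc g t := by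
    intro g t u
    rw [hHfundef]
    simp only [ContinuousAffineMap.add_apply, ContinuousAffineMap.smul_apply,
      ContinuousAffineMap.coe_const, Function.const]
  -- σσ bounds for t ∈ [0, 1/2]
  have hσσ1 : ∀ g t, 0 ≤ t → t ≤ 1 / 2 → 1 ≤ σσ g t := by
    intro g t ht0 ht
    have h1 := hss1 g
    simp only [hσσdef]
    nlinarith
  have hσσs : ∀ g t, 0 ≤ t → t ≤ 1 / 2 → σσ g t ≤ ss g := by
    intro g t ht0 ht
    have h1 := hss1 g
    simp only [hσσdef]
    nlinarith
  -- membership of the homotopy in C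
  have key : ∀ (g : ↥(compSet Z X Y f)) (t : ℝ), 0 ≤ t → t ≤ 1 →
      Hfun g t ∈ compSet Z X Y f := by
    intro g t ht0 ht1
    have hgZconv : Convex ℝ (⇑(↑g : U →ᴬ[ℝ] V) '' Z) := by
      have := hZconv.affine_image ((↑g : U →ᴬ[ℝ] V) : U →ᵃ[ℝ] V)
      simpa using this
    by_cases ht : t ≤ 1 / 2
    · -- constant at x₀ + σ • v
      have haa0 : aa t = 0 := max_eq_right (by linarith)
      have hccval : cc g t = x₀ + σσ g t • ((vv g : E) : V) := if_pos ht
      have hval : ∀ u, Hfun g t u = x₀ + σσ g t • ((vv g : E) : V) := by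
        intro u
        rw [Happly, haa0, zero_smul, zero_add, hccval]
      have hmemX : x₀ + σσ g t • ((vv g : E) : V) ∈ X := by
        have hcoe : ((σσ g t • vv g : E) : V) = σσ g t • ((vv g : E) : V) := rfl
        have hle : γ (σσ g t • vv g) ≤ 1 := by
          rw [hγsmul _ (by linarith [hσσ1 g t ht0 ht]) _]
          calc σσ g t * γ (vv g) ≤ ss g * γ (vv g) :=
                mul_le_mul_of_nonneg_right (hσσs g t ht0 ht) (gauge_nonneg _)
          _ = 1 := hγss g
        have := hγmem _ hle
        rw [hKdef] at this
        simpa [hcoe] using this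
      constructor
      · rintro y ⟨u, hu, rfl⟩
        rw [hval u]
        exact hmemX
      · rw [Set.eq_empty_iff_forall_notMem]
        rintro y ⟨⟨u, hu, rfl⟩, hy⟩
        rw [hval u] at hy
        exact hray g (σσ g t) (hσσ1 g t ht0 ht) hy
    · -- convex combination inside g '' Z
      push_neg at ht
      have haa : aa t = 2 * t - 1 := max_eq_left (by linarith)
      have hccval : cc g t = (2 - 2 * t) • ((↑g : U →ᴬ[ℝ] V) z₀) := if_neg (by linarith)
      have himg : ∀ u ∈ Z, Hfun g t u ∈ ⇑(↑g : U →ᴬ[ℝ] V) '' Z := by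
        intro u hu
        rw [Happly, haa, hccval]
        exact hgZconv ⟨u, hu, rfl⟩ ⟨z₀, hz₀, rfl⟩ (by linarith) (by linarith) (by ring)
      obtain ⟨hg1, hg2⟩ := g.2
      constructor
      · rintro y ⟨u, hu, rfl⟩
        exact hg1 (himg u hu)
      · rw [Set.eq_empty_iff_forall_notMem]
        rintro y ⟨⟨u, hu, rfl⟩, hy⟩
        have hmem : Hfun g t u
            ∈ (⇑(↑g : U →ᴬ[ℝ] V) '' Z) ∩ intrinsicInterior ℝ (⇑f '' Y) := ⟨himg u hu, hy⟩
        rw [hg2] at hmem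
        exact hmem
  -- assemble
  refine ⟨fun a => ⟨Hfun a.1 ↑a.2, key a.1 _ a.2.2.1 a.2.2.2⟩, ?_, ?_, ?_, ?_⟩
  · -- continuity
    apply Continuous.subtype_mk
    have hvalcont : Continuous fun g : ↥(compSet Z X Y f) => (↑g : U →ᴬ[ℝ] V) z₀ :=
      (contAffine_eval_continuous z₀).comp continuous_subtype_val
    have hvvcont : Continuous vv :=
      Continuous.subtype_mk (hvalcont.sub continuous_const) _
    have hsscont : Continuous ss :=
      (hγcont.comp hvvcont).inv₀ (fun g => (hγpos g).ne')
    have htcont : Continuous fun a : ↥(compSet Z X Y f) × ↥(Set.Icc (0:ℝ) 1) => (a.2 : ℝ) :=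
      continuous_subtype_val.comp continuous_snd
    have hgcont : Continuous fun a : ↥(compSet Z X Y f) × ↥(Set.Icc (0:ℝ) 1) =>
        (↑a.1 : U →ᴬ[ℝ] V) := continuous_subtype_val.comp continuous_fst
    have haacont : Continuous fun a : ↥(compSet Z X Y f) × ↥(Set.Icc (0:ℝ) 1) => aa (a.2 : ℝ) :=
      ((continuous_const.mul htcont).sub continuous_const).max continuous_const
    have hσσcont : Continuous fun a : ↥(compSet Z X Y f) × ↥(Set.Icc (0:ℝ) 1) =>
        σσ a.1 (a.2 : ℝ) := by
      apply Continuous.add (continuous_const.mul htcont)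
      exact (continuous_const.sub (continuous_const.mul htcont)).mul
        (hsscont.comp continuous_fst)
    have hcccont : Continuous fun a : ↥(compSet Z X Y f) × ↥(Set.Icc (0:ℝ) 1) =>
        cc a.1 (a.2 : ℝ) := by
      apply Continuous.if_le
      · exact continuous_const.add (hσσcont.smul
          (continuous_subtype_val.comp (hvvcont.comp continuous_fst)))
      · exact (continuous_const.sub (continuous_const.mul htcont)).smul
          ((contAffine_eval_continuous z₀).comp hgcont)
      · exact htcont
      · exact continuous_const
      · intro a ha
        have hσ1 : σσ a.1 (a.2 : ℝ) = 1 := by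
          show 2*(a.2:ℝ) + (1-2*(a.2:ℝ))*ss a.1 = 1
          rw [ha]; ring
        rw [hσ1, one_smul, hgz₀eq a.1, ha]
        norm_num
    exact (haacont.smul hgcont).add (contAffine_const_continuous.comp hcccont)
  · -- H at t = 1
    intro g
    apply Subtype.ext
    apply ContinuousAffineMap.ext
    intro u
    have h1 : ¬ ((1:ℝ) ≤ 1/2) := by norm_num
    show Hfun g 1 u = (↑g : U →ᴬ[ℝ] V) u
    rw [Happly]
    have haa1 : aa 1 = 1 := by simp [haadef]; norm_num
    have hcc1 : cc g 1 = (2 - 2 * 1 : ℝ) • ((↑g : U →ᴬ[ℝ] V) z₀) := if_neg h1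
    rw [haa1, hcc1, one_smul]
    norm_num
  · -- H at t = 0 is in D
    intro g
    have h0 : ((0:ℝ) ≤ 1/2) := by norm_num
    have hσ0 : σσ g 0 = ss g := by simp [hσσdef]
    have hcc0 : cc g 0 = x₀ + ss g • ((vv g : E) : V) := by
      show (if (0:ℝ) ≤ 1/2 then x₀ + σσ g 0 • ((vv g : E) : V)
        else (2 - 2*(0:ℝ)) • ((↑g : U →ᴬ[ℝ] V) z₀)) = _
      rw [if_pos h0, hσ0]
    refine ⟨x₀ + ss g • ((vv g : E) : V), ⟨?_, ?_⟩, ?_⟩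
    · -- in X
      have hcoe : ((ss g • vv g : E) : V) = ss g • ((vv g : E) : V) := rfl
      have hle : γ (ss g • vv g) ≤ 1 := by
        rw [hγsmul _ (by linarith [hss1 g]) _, hγss g]
      have := hγmem _ hle
      rw [hKdef] at this
      simpa [hcoe] using this
    · -- not in relint X
      intro hcon
      have hcoe : ((ss g • vv g : E) : V) = ss g • ((vv g : E) : V) := rfl
      have hmemint : (ss g • vv g : E) ∈ interior K := (chartX _).1 (by rw [hcoe]; exact hcon)
      have hlt := hγlt _ hmemint
      rw [hγsmul _ (by linarith [hss1 g]) _, hγss g] at hlt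
      exact lt_irrefl _ hlt
    · intro u
      show Hfun g 0 u = _
      rw [Happly]
      have haa0 : aa 0 = 0 := by simp [haadef]
      rw [haa0, zero_smul, zero_add, hcc0]
  · -- stationarity on D
    rintro g t ⟨x, ⟨hxX, hxnot⟩, hconst⟩
    have hgz : (↑g : U →ᴬ[ℝ] V) z₀ = x := hconst z₀
    have hγ1 : γ (vv g) = 1 := by
      refine le_antisymm (hγle1 _ (hvvK g)) ?_
      by_contra hlt
      push_neg at hlt
      have hmemint : vv g ∈ interior K := hγlt' _ hlt
      have := (chartX (vv g)).2 hmemint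
      rw [hgz₀eq g, hgz] at this
      exact hxnot this
    have hss' : ss g = 1 := by
      show (γ (vv g))⁻¹ = 1
      rw [hγ1, inv_one]
    apply Subtype.ext
    apply ContinuousAffineMap.ext
    intro u
    show Hfun g (t : ℝ) u = (↑g : U →ᴬ[ℝ] V) u
    rw [Happly]
    obtain ⟨ht0, ht1⟩ := t.2
    by_cases ht : (t : ℝ) ≤ 1 / 2
    · have haa0 : aa (t : ℝ) = 0 := max_eq_right (by linarith)
      have hσ1 : σσ g (t : ℝ) = 1 := by
        show 2*(t:ℝ) + (1-2*(t:ℝ))*ss g = 1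
        rw [hss']; ring
      have hccval : cc g (t : ℝ) = x₀ + σσ g (t : ℝ) • ((vv g : E) : V) := if_pos ht
      rw [haa0, zero_smul, zero_add, hccval, hσ1, one_smul, hgz₀eq g, hgz, hconst u]
    · push_neg at ht
      have haa : aa (t : ℝ) = 2 * (t : ℝ) - 1 := max_eq_left (by linarith)
      have hccval : cc g (t : ℝ) = (2 - 2 * (t : ℝ)) • ((↑g : U →ᴬ[ℝ] V) z₀) :=
        if_neg (by linarith)
      rw [haa, hccval, hgz, hconst u, ← add_smul]
      norm_num
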